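/- For a classical channel P(x̃|x) acting on a source X with side information Y (joint distribution P(x,y)), the channel that extremizes the Information Bottleneck Lagrangian L = I(X;X̃) − β I(X̃;Y) − Σ_{x,x̃} λ(x) P(x̃|x) satisfies P(x̃|x) = P(x̃) e^{−β D(P(y|x) ‖ P(y|x̃))} / Z(x,β), where D(·‖·) is the Kullback–Leibler divergence and Z(x,β) is a normalizing factor. Equivalently: any critical point of L with respect to P(x̃|x) (subject to normalization) has this exponential form. -/

import Mathlib

open scoped BigOperators

noncomputable section

variable {X Y Xt : Type*} [Fintype X] [Fintype Y] [Fintype Xt]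

/-- Marginal `P(x)` of the joint distribution `P(x,y)`. -/
def margX (P : X → Y → ℝ) (x : X) : ℝ := ∑ y, P x y

/-- Marginal `P(y)` of the joint distribution `P(x,y)`. -/
def margY (P : X → Y → ℝ) (y : Y) : ℝ := ∑ x, P x y

/-- Output marginal `P(x̃) = Σ_x P(x) P(x̃|x)` induced by the channel `Q = P(x̃|x)`. -/
def margXt (P : X → Y → ℝ) (Q : X → Xt → ℝ) (t : Xt) : ℝ := ∑ x, margX P x * Q x t

/-- Joint `P(x̃,y) = Σ_x P(x,y) P(x̃|x)` induced via the Markov chain `Y–X–X̃`. -/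
def margXtY (P : X → Y → ℝ) (Q : X → Xt → ℝ) (t : Xt) (y : Y) : ℝ := ∑ x, P x y * Q x t

/-- Mutual information `I(X;X̃)` between the source and the channel output. -/
def mutInfoXXt (P : X → Y → ℝ) (Q : X → Xt → ℝ) : ℝ :=
  ∑ x, ∑ t, margX P x * Q x t * Real.log (Q x t / margXt P Q t)

/-- Mutual information `I(X̃;Y)` between the channel output and the side information. -/
def mutInfoXtY (P : X → Y → ℝ) (Q : X → Xt → ℝ) : ℝ :=
  ∑ t, ∑ y, margXtY P Q t y * Real.log (margXtY P Q t y / (margXt P Q t * margY P y))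

/-- The Information Bottleneck Lagrangian
`L(Q) = I(X;X̃) − β I(X̃;Y) − Σ_{x,x̃} λ(x) Q(x̃|x)`. -/
def ibLagrangian (β : ℝ) (lam : X → ℝ) (P : X → Y → ℝ) : (X → Xt → ℝ) → ℝ :=
  fun Q => mutInfoXXt P Q - β * mutInfoXtY P Q - ∑ x, ∑ t, lam x * Q x t

/-- Kullback–Leibler divergence `D(P(y|x) ‖ P(y|x̃))`. -/
def klCond (P : X → Y → ℝ) (Q : X → Xt → ℝ) (x : X) (t : Xt) : ℝ :=
  ∑ y, (P x y / margX P x) * Real.log ((P x y / margX P x) / (margXtY P Q t y / margXt P Q t))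

/-- Any critical point of the Information Bottleneck Lagrangian (which already incorporates
the normalization constraint via the multipliers `λ(x)`) has the exponential form
`P(x̃|x) = P(x̃) e^{−β D(P(y|x) ‖ P(y|x̃))} / Z(x,β)`. -/
theorem ib_critical_point_form (P : X → Y → ℝ) (Q : X → Xt → ℝ)
    (β : ℝ) (hβ : 0 < β) (lam : X → ℝ)
    (hPpos : ∀ x y, 0 < P x y) (hPsum : ∑ x, ∑ y, P x y = 1)
    (hQpos : ∀ x t, 0 < Q x t) (hQnorm : ∀ x, ∑ t, Q x t = 1)
    (hcrit : fderiv ℝ (ibLagrangian (Xt := Xt) β lam P) Q = 0) :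
    ∃ Z : X → ℝ, ∀ x t,
      Q x t = margXt P Q t * Real.exp (-β * klCond P Q x t) / Z x := by
  classical
  -- nonemptiness
  have hXne : (Finset.univ : Finset X).Nonempty := by
    by_contra h
    rw [Finset.not_nonempty_iff_eq_empty] at h
    rw [h] at hPsum; simp at hPsum
  have hYne : (Finset.univ : Finset Y).Nonempty := by
    by_contra h
    rw [Finset.not_nonempty_iff_eq_empty] at h
    simp [h] at hPsum
  have ha : ∀ x, 0 < margX P x := fun x => Finset.sum_pos (fun y _ => hPpos x y) hYne
  have hb : ∀ y, 0 < margY P y := fun y => Finset.sum_pos (fun x _ => hPpos x y) hXne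
  have hm : ∀ t, 0 < margXt P Q t :=
    fun t => Finset.sum_pos (fun x _ => mul_pos (ha x) (hQpos x t)) hXne
  have hr : ∀ t y, 0 < margXtY P Q t y :=
    fun t y => Finset.sum_pos (fun x _ => mul_pos (hPpos x y) (hQpos x t)) hXne
  -- differentiability
  have hev : ∀ x t, DifferentiableAt ℝ (fun Q' : X → Xt → ℝ => Q' x t) Q := by
    intro x t
    exact differentiableAt_pi.1 (differentiableAt_pi.1 differentiableAt_id x) t
  have hmdiff : ∀ t, DifferentiableAt ℝ (fun Q' : X → Xt → ℝ => margXt P Q' t) Q := by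
    intro t
    simp only [margXt]
    exact DifferentiableAt.fun_sum fun x _ => (hev x t).const_mul (margX P x)
  have hrdiff : ∀ t y, DifferentiableAt ℝ (fun Q' : X → Xt → ℝ => margXtY P Q' t y) Q := by
    intro t y
    simp only [margXtY]
    exact DifferentiableAt.fun_sum fun x _ => (hev x t).const_mul (P x y)
  have hdiff : DifferentiableAt ℝ (ibLagrangian (Xt := Xt) β lam P) Q := by
    unfold ibLagrangian mutInfoXXt mutInfoXtY
    apply DifferentiableAt.sub
    apply DifferentiableAt.sub
    · refine DifferentiableAt.fun_sum fun x _ => DifferentiableAt.fun_sum fun t _ =>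
        ((hev x t).const_mul (margX P x)).mul (DifferentiableAt.log ?_
            (div_ne_zero (hQpos x t).ne' (hm t).ne'))
      simp only [div_eq_mul_inv]
      exact (hev x t).mul ((hmdiff t).inv (hm t).ne')
    · refine DifferentiableAt.const_mul (DifferentiableAt.fun_sum fun t _ =>
        DifferentiableAt.fun_sum fun y _ =>
        (hrdiff t y).mul (DifferentiableAt.log ?_
          (div_ne_zero (hr t y).ne' (mul_pos (hm t) (hb y)).ne'))) β
      simp only [div_eq_mul_inv]
      exact (hrdiff t y).mul (((hmdiff t).mul_const (margY P y)).inv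
        (mul_pos (hm t) (hb y)).ne')
    · exact DifferentiableAt.fun_sum fun x _ => DifferentiableAt.fun_sum fun t _ =>
        (hev x t).const_mul (lam x)
  -- key stationarity equation
  have key : ∀ x0 t0,
      margX P x0 * Real.log (Q x0 t0 / margXt P Q t0)
        - β * (∑ y, P x0 y * Real.log (margXtY P Q t0 y / (margXt P Q t0 * margY P y)))
        - lam x0 = 0 := by
    intro x0 t0
    set v : X → Xt → ℝ := fun x t => if x = x0 then (if t = t0 then (1:ℝ) else 0) else 0
      with hv
    set dm : Xt → ℝ := fun t => ∑ x, margX P x * v x t with hdm_def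
    set dr : Xt → Y → ℝ := fun t y => ∑ x, P x y * v x t with hdr_def
    -- the directional derivative is zero
    have hline : HasDerivAt (fun s : ℝ => Q + s • v) v 0 := by
      simpa using ((hasDerivAt_id (0:ℝ)).smul_const v).const_add Q
    have hF : HasFDerivAt (ibLagrangian (Xt := Xt) β lam P)
        (0 : (X → Xt → ℝ) →L[ℝ] ℝ) Q := by
      rw [← hcrit]; exact hdiff.hasFDerivAt
    have hF' : HasFDerivAt (ibLagrangian (Xt := Xt) β lam P)
        (0 : (X → Xt → ℝ) →L[ℝ] ℝ) ((fun s : ℝ => Q + s • v) 0) := by simpa using hF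
    have hg0 : HasDerivAt (fun s : ℝ => ibLagrangian (Xt := Xt) β lam P (Q + s • v)) 0 0 := by
      have := hF'.comp_hasDerivAt 0 hline
      exact this
    -- rewrite the function explicitly
    have hgrw : (fun s : ℝ => ibLagrangian (Xt := Xt) β lam P (Q + s • v)) =
        (fun s : ℝ =>
          (∑ x, ∑ t, margX P x * (Q x t + s * v x t) *
              Real.log ((Q x t + s * v x t) / (∑ x', margX P x' * (Q x' t + s * v x' t))))
          - β * (∑ t, ∑ y, (∑ x, P x y * (Q x t + s * v x t)) *
              Real.log ((∑ x, P x y * (Q x t + s * v x t)) /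
                ((∑ x', margX P x' * (Q x' t + s * v x' t)) * margY P y)))
          - ∑ x, ∑ t, lam x * (Q x t + s * v x t)) := by
      funext s
      simp only [ibLagrangian, mutInfoXXt, mutInfoXtY, margXt, margXtY,
        Pi.add_apply, Pi.smul_apply, smul_eq_mul]
    rw [hgrw] at hg0
    -- explicit one-variable derivatives
    have hq : ∀ x t, HasDerivAt (fun s : ℝ => Q x t + s * v x t) (v x t) 0 := by
      intro x t
      simpa using ((hasDerivAt_id (0:ℝ)).mul_const (v x t)).const_add (Q x t)
    have hM : ∀ t, HasDerivAt (fun s : ℝ => ∑ x', margX P x' * (Q x' t + s * v x' t)) (dm t) 0 :=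
      fun t => HasDerivAt.fun_sum fun x _ => (hq x t).const_mul (margX P x)
    have hM0 : ∀ t, (∑ x', margX P x' * (Q x' t + (0:ℝ) * v x' t)) = margXt P Q t := by
      intro t; simp [margXt]
    have hρ : ∀ t y, HasDerivAt (fun s : ℝ => ∑ x, P x y * (Q x t + s * v x t)) (dr t y) 0 :=
      fun t y => HasDerivAt.fun_sum fun x _ => (hq x t).const_mul (P x y)
    have hρ0 : ∀ t y, (∑ x, P x y * (Q x t + (0:ℝ) * v x t)) = margXtY P Q t y := by
      intro t y; simp [margXtY]
    have hA : HasDerivAt (fun s : ℝ => ∑ x, ∑ t, margX P x * (Q x t + s * v x t) *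
          Real.log ((Q x t + s * v x t) / (∑ x', margX P x' * (Q x' t + s * v x' t))))
        (∑ x, ∑ t, margX P x * (v x t * Real.log (Q x t / margXt P Q t)
            + v x t - Q x t * dm t / margXt P Q t)) 0 := by
      refine HasDerivAt.fun_sum fun x _ => HasDerivAt.fun_sum fun t _ => ?_
      have hMne : (∑ x', margX P x' * (Q x' t + (0:ℝ) * v x' t)) ≠ 0 := by
        rw [hM0 t]; exact (hm t).ne'
      have hdivne : (Q x t + (0:ℝ) * v x t) /
          (∑ x', margX P x' * (Q x' t + (0:ℝ) * v x' t)) ≠ 0 := by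
        rw [hM0 t]
        simpa using div_ne_zero (hQpos x t).ne' (hm t).ne'
      have raw := ((hq x t).const_mul (margX P x)).mul
        (((hq x t).div (hM t) hMne).log hdivne)
      refine raw.congr_deriv ?_
      simp only [Pi.div_apply]
      rw [hM0 t]
      simp only [zero_mul, add_zero]
      field_simp [(hQpos x t).ne', (hm t).ne']
      ring
    have hB : HasDerivAt (fun s : ℝ => ∑ t, ∑ y, (∑ x, P x y * (Q x t + s * v x t)) *
          Real.log ((∑ x, P x y * (Q x t + s * v x t)) /
            ((∑ x', margX P x' * (Q x' t + s * v x' t)) * margY P y)))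
        (∑ t, ∑ y, (dr t y * Real.log (margXtY P Q t y / (margXt P Q t * margY P y))
            + dr t y - margXtY P Q t y * dm t / margXt P Q t)) 0 := by
      refine HasDerivAt.fun_sum fun t _ => HasDerivAt.fun_sum fun y _ => ?_
      have hdenne : (∑ x', margX P x' * (Q x' t + (0:ℝ) * v x' t)) * margY P y ≠ 0 := by
        rw [hM0 t]; exact (mul_pos (hm t) (hb y)).ne'
      have hratne : (∑ x, P x y * (Q x t + (0:ℝ) * v x t)) /
          ((∑ x', margX P x' * (Q x' t + (0:ℝ) * v x' t)) * margY P y) ≠ 0 := by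
        rw [hM0 t, hρ0 t y]
        exact div_ne_zero (hr t y).ne' (mul_pos (hm t) (hb y)).ne'
      have raw := (hρ t y).mul
        (((hρ t y).div ((hM t).mul_const (margY P y)) hdenne).log hratne)
      refine raw.congr_deriv ?_
      simp only [Pi.div_apply]
      rw [hM0 t, hρ0 t y]
      field_simp [(hr t y).ne', (hm t).ne', (hb y).ne']
      ring
    have hC : HasDerivAt (fun s : ℝ => ∑ x, ∑ t, lam x * (Q x t + s * v x t))
        (∑ x, ∑ t, lam x * v x t) 0 :=
      HasDerivAt.fun_sum fun x _ => HasDerivAt.fun_sum fun t _ => (hq x t).const_mul (lam x)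
    have hg1 := (hA.sub (hB.const_mul β)).sub hC
    have hzero := hg1.unique hg0
    -- collapse the indicator sums
    have hdm : ∀ t, dm t = if t = t0 then margX P x0 else 0 := by
      intro t
      simp [hdm_def, hv, mul_ite, Finset.sum_ite_eq']
    have hdr : ∀ t y, dr t y = if t = t0 then P x0 y else 0 := by
      intro t y
      simp [hdr_def, hv, mul_ite, Finset.sum_ite_eq']
    have hsum_dm : (∑ t, dm t) = margX P x0 := by
      simp [hdm, Finset.sum_ite_eq']
    have hsum_r : ∀ t, (∑ y, margXtY P Q t y) = margXt P Q t := by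
      intro t
      simp only [margXtY, margXt, margX]
      rw [Finset.sum_comm]
      exact Finset.sum_congr rfl fun x _ => by rw [Finset.sum_mul]
    have hmdm : ∀ t, margXt P Q t * (dm t / margXt P Q t) = dm t := by
      intro t
      rw [mul_comm, div_mul_cancel₀ _ (hm t).ne']
    have hDA : (∑ x, ∑ t, margX P x * (v x t * Real.log (Q x t / margXt P Q t)
          + v x t - Q x t * dm t / margXt P Q t))
        = margX P x0 * Real.log (Q x0 t0 / margXt P Q t0) := by
      have h1 : (∑ x, ∑ t, margX P x * (v x t * Real.log (Q x t / margXt P Q t)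
            + v x t - Q x t * dm t / margXt P Q t))
          = (∑ x, ∑ t, margX P x * v x t * (Real.log (Q x t / margXt P Q t) + 1))
            - (∑ x, ∑ t, margX P x * Q x t * (dm t / margXt P Q t)) := by
        rw [← Finset.sum_sub_distrib]
        refine Finset.sum_congr rfl fun x _ => ?_
        rw [← Finset.sum_sub_distrib]
        refine Finset.sum_congr rfl fun t _ => ?_
        ring
      have h2 : (∑ x, ∑ t, margX P x * v x t * (Real.log (Q x t / margXt P Q t) + 1))
          = margX P x0 * (Real.log (Q x0 t0 / margXt P Q t0) + 1) := by
        simp [hv, mul_ite, ite_mul, mul_zero, zero_mul, mul_one, Finset.sum_ite_eq']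
      have h3 : (∑ x, ∑ t, margX P x * Q x t * (dm t / margXt P Q t)) = margX P x0 := by
        rw [Finset.sum_comm]
        have h4 : ∀ t, (∑ x, margX P x * Q x t * (dm t / margXt P Q t)) = dm t := by
          intro t
          rw [← Finset.sum_mul]
          rw [show (∑ x, margX P x * Q x t) = margXt P Q t from rfl]
          exact hmdm t
        simp only [h4]
        exact hsum_dm
      rw [h1, h2, h3]
      ring
    have hDB : (∑ t, ∑ y, (dr t y * Real.log (margXtY P Q t y / (margXt P Q t * margY P y))
          + dr t y - margXtY P Q t y * dm t / margXt P Q t))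
        = ∑ y, P x0 y * Real.log (margXtY P Q t0 y / (margXt P Q t0 * margY P y)) := by
      have h1 : (∑ t, ∑ y, (dr t y * Real.log (margXtY P Q t y / (margXt P Q t * margY P y))
            + dr t y - margXtY P Q t y * dm t / margXt P Q t))
          = (∑ t, ∑ y, dr t y *
                (Real.log (margXtY P Q t y / (margXt P Q t * margY P y)) + 1))
            - (∑ t, ∑ y, margXtY P Q t y * (dm t / margXt P Q t)) := by
        rw [← Finset.sum_sub_distrib]
        refine Finset.sum_congr rfl fun t _ => ?_
        rw [← Finset.sum_sub_distrib]
        refine Finset.sum_congr rfl fun y _ => ?_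
        ring
      have h2 : (∑ t, ∑ y, dr t y *
            (Real.log (margXtY P Q t y / (margXt P Q t * margY P y)) + 1))
          = (∑ y, P x0 y * Real.log (margXtY P Q t0 y / (margXt P Q t0 * margY P y)))
            + margX P x0 := by
        rw [Finset.sum_comm]
        simp only [hdr, ite_mul, zero_mul]
        rw [Finset.sum_congr rfl fun y (_ : y ∈ Finset.univ) => Finset.sum_ite_eq'
          Finset.univ t0 (fun t => P x0 y *
            (Real.log (margXtY P Q t y / (margXt P Q t * margY P y)) + 1))]
        simp only [Finset.mem_univ, if_true, mul_add, mul_one]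
        rw [Finset.sum_add_distrib]
        rfl
      have h3 : (∑ t, ∑ y, margXtY P Q t y * (dm t / margXt P Q t)) = margX P x0 := by
        have h4 : ∀ t, (∑ y, margXtY P Q t y * (dm t / margXt P Q t)) = dm t := by
          intro t
          rw [← Finset.sum_mul, hsum_r t]
          exact hmdm t
        simp only [h4]
        exact hsum_dm
      rw [h1, h2, h3]
      ring
    have hDC : (∑ x, ∑ t, lam x * v x t) = lam x0 := by
      simp [hv, mul_ite, Finset.sum_ite_eq']
    rw [hDA, hDB, hDC] at hzero
    exact hzero
  -- relate the stationarity sum to the KL divergence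
  have hKL : ∀ x t, (∑ y, P x y * Real.log (margXtY P Q t y / (margXt P Q t * margY P y)))
      = (∑ y, P x y * Real.log (P x y / (margX P x * margY P y)))
        - margX P x * klCond P Q x t := by
    intro x t
    rw [klCond, Finset.mul_sum, ← Finset.sum_sub_distrib]
    refine Finset.sum_congr rfl fun y _ => ?_
    have e1 : margX P x * ((P x y / margX P x) *
          Real.log ((P x y / margX P x) / (margXtY P Q t y / margXt P Q t)))
        = P x y * Real.log ((P x y / margX P x) / (margXtY P Q t y / margXt P Q t)) := by
      rw [← mul_assoc, mul_comm (margX P x), div_mul_cancel₀ _ (ha x).ne']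
    rw [e1, ← mul_sub]
    congr 1
    rw [Real.log_div (hr t y).ne' (mul_pos (hm t) (hb y)).ne',
      Real.log_mul (hm t).ne' (hb y).ne',
      Real.log_div (hPpos x y).ne' (mul_pos (ha x) (hb y)).ne',
      Real.log_mul (ha x).ne' (hb y).ne',
      Real.log_div (div_pos (hPpos x y) (ha x)).ne' (div_pos (hr t y) (hm t)).ne',
      Real.log_div (hPpos x y).ne' (ha x).ne',
      Real.log_div (hr t y).ne' (hm t).ne']
    ring
  -- conclude
  refine ⟨fun x => Real.exp (-((lam x
      + β * (∑ y, P x y * Real.log (P x y / (margX P x * margY P y)))) / margX P x)),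
    fun x t => ?_⟩
  have hk := key x t
  rw [hKL x t] at hk
  set C1 := ∑ y, P x y * Real.log (P x y / (margX P x * margY P y)) with hC1
  set μ := (lam x + β * C1) / margX P x with hμ
  have hlog : Real.log (Q x t / margXt P Q t) = μ - β * klCond P Q x t := by
    rw [hμ, eq_sub_iff_add_eq, eq_div_iff (ha x).ne']
    linear_combination hk
  have hQm : Q x t / margXt P Q t = Real.exp (μ - β * klCond P Q x t) := by
    rw [← hlog, Real.exp_log (div_pos (hQpos x t) (hm t))]
  calc Q x t = margXt P Q t * (Q x t / margXt P Q t) := by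
        rw [mul_comm, div_mul_cancel₀ _ (hm t).ne']
    _ = margXt P Q t * Real.exp (μ - β * klCond P Q x t) := by rw [hQm]
    _ = margXt P Q t * Real.exp (-β * klCond P Q x t) / Real.exp (-μ) := by
        rw [mul_div_assoc, ← Real.exp_sub]
        congr 2
        ring

end
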